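/- arXiv:2003.02424 — 6 statements merged into one kernel-verified Lean document; each statement's English description precedes it below -/
import Mathlib

section
/- Let V be a finite set, let M be a matroid on V with independent-set family ℐ ⊆ 2^V, and let n ≥ 1. On the ground set V × {1,…,n} (the disjoint union of n copies of V), for a subset S ⊆ V × {1,…,n} and i ∈ {1,…,n} write X_i(S) = {v ∈ V : (v,i) ∈ S}. Then the family ℐ̃ = { S ⊆ V × {1,…,n} : ⋂_{i=1}^n X_i(S) ∈ ℐ } is the independent-set family of a matroid on V × {1,…,n}; that is, ℐ̃ contains the empty set, is closed under taking subsets, and satisfies the augmentation axiom: for every S, T ∈ ℐ̃ with |S| < |T| there exists e ∈ T \ S such that S ∪ {e} ∈ ℐ̃. -/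
/-- The family of subsets of the disjoint union of `n` copies of `V`
whose coordinatewise intersection is independent in a matroid on `V` is itself the
independent-set family of a matroid. -/
theorem stmt_0 {V : Type*} [Fintype V] [DecidableEq V] (n : ℕ) (hn : 1 ≤ n)
    (Indep : Finset V → Prop)
    (h_empty : Indep ∅)
    (h_subset : ∀ X Y : Finset V, Indep Y → X ⊆ Y → Indep X)
    (h_aug : ∀ X Y : Finset V, Indep X → Indep Y → X.card < Y.card →
      ∃ e ∈ Y \ X, Indep (insert e X))
    (tInd : Finset (V × Fin n) → Prop)
    (htInd : ∀ S : Finset (V × Fin n),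
      tInd S ↔ Indep (Finset.univ.filter fun v : V => ∀ i : Fin n, (v, i) ∈ S)) :
    tInd ∅ ∧
    (∀ S T : Finset (V × Fin n), tInd T → S ⊆ T → tInd S) ∧
    (∀ S T : Finset (V × Fin n), tInd S → tInd T → S.card < T.card →
      ∃ e ∈ T \ S, tInd (insert e S)) := by
  -- abbreviation for the coordinatewise intersection
  set X : Finset (V × Fin n) → Finset V :=
    fun S => Finset.univ.filter fun v : V => ∀ i : Fin n, (v, i) ∈ S with hXdef
  have hmemX : ∀ (S : Finset (V × Fin n)) (v : V), v ∈ X S ↔ ∀ i : Fin n, (v, i) ∈ S := by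
    intro S v; simp [hXdef]
  -- column counts
  set cnt : Finset (V × Fin n) → V → ℕ :=
    fun S v => (Finset.univ.filter fun i : Fin n => (v, i) ∈ S).card with hcntdef
  have hcnt_le : ∀ S v, cnt S v ≤ n := by
    intro S v
    calc cnt S v ≤ (Finset.univ : Finset (Fin n)).card := Finset.card_filter_le _ _
    _ = n := by simp
  have hcnt_full : ∀ S v, cnt S v = n ↔ ∀ i : Fin n, (v, i) ∈ S := by
    intro S v
    constructor
    · intro h i
      have : (Finset.univ.filter fun i : Fin n => (v, i) ∈ S) = Finset.univ := by
        apply Finset.eq_univ_of_card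
        simpa using h
      have hi : i ∈ (Finset.univ.filter fun i : Fin n => (v, i) ∈ S) := by
        rw [this]; exact Finset.mem_univ i
      exact (Finset.mem_filter.mp hi).2
    · intro h
      have : (Finset.univ.filter fun i : Fin n => (v, i) ∈ S) = Finset.univ := by
        apply Finset.filter_true_of_mem
        intro i _; exact h i
      simp [hcntdef, this]
  have hcard_sum : ∀ S : Finset (V × Fin n), S.card = ∑ v : V, cnt S v := by
    intro S
    rw [Finset.card_eq_sum_card_fiberwise (f := Prod.fst) (t := Finset.univ)
      (fun x _ => Finset.mem_univ _)]
    apply Finset.sum_congr rfl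
    intro v _
    have himg : (S.filter fun e => e.1 = v)
        = (Finset.univ.filter fun i : Fin n => (v, i) ∈ S).image (fun i => (v, i)) := by
      ext e
      simp only [Finset.mem_filter, Finset.mem_image, Finset.mem_univ, true_and]
      constructor
      · rintro ⟨heS, hev⟩
        refine ⟨e.2, ?_, ?_⟩
        · rw [show ((v, e.2) : V × Fin n) = e from Prod.ext hev.symm rfl]; exact heS
        · exact Prod.ext hev.symm rfl
      · rintro ⟨i, hiS, rfl⟩
        exact ⟨hiS, rfl⟩
    rw [himg, Finset.card_image_of_injective _ (fun i j h => (Prod.ext_iff.mp h).2)]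
  -- inserting e into S can only add e.1 to the intersection
  have hinsert : ∀ (S : Finset (V × Fin n)) (e : V × Fin n),
      X (insert e S) ⊆ insert e.1 (X S) := by
    intro S e w hw
    rw [hmemX] at hw
    by_cases hwe : w = e.1
    · rw [hwe]; exact Finset.mem_insert_self _ _
    · apply Finset.mem_insert_of_mem
      rw [hmemX]
      intro i
      have := hw i
      rcases Finset.mem_insert.mp this with h | h
      · exact absurd (congrArg Prod.fst h) hwe
      · exact h
  refine ⟨?_, ?_, ?_⟩
  · -- empty set
    rw [htInd]
    have hE : X (∅ : Finset (V × Fin n)) = ∅ := by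
      ext v
      rw [hmemX]
      simp only [Finset.notMem_empty, iff_false]
      intro h
      exact h ⟨0, hn⟩
    rw [show (Finset.univ.filter fun v : V => ∀ i : Fin n, (v, i) ∈ (∅ : Finset (V × Fin n)))
        = X ∅ from rfl, hE]
    exact h_empty
  · -- downward closed
    intro S T hT hST
    rw [htInd] at hT ⊢
    refine h_subset _ _ hT ?_
    intro v hv
    rw [show (Finset.univ.filter fun v : V => ∀ i : Fin n, (v, i) ∈ S) = X S from rfl,
      hmemX] at hv
    rw [show (Finset.univ.filter fun v : V => ∀ i : Fin n, (v, i) ∈ T) = X T from rfl,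
      hmemX]
    exact fun i => hST (hv i)
  · -- augmentation
    intro S T hS hT hcard
    rw [htInd] at hS hT
    have hS' : Indep (X S) := hS
    have hT' : Indep (X T) := hT
    -- the key step once we know |X S| < |X T|
    have hfinish : (X S).card < (X T).card → ∃ e ∈ T \ S, tInd (insert e S) := by
      intro hlt
      obtain ⟨v, hv, hind⟩ := h_aug (X S) (X T) hS' hT' hlt
      rw [Finset.mem_sdiff] at hv
      obtain ⟨hvT, hvS⟩ := hv
      rw [hmemX] at hvT
      have : ∃ i : Fin n, (v, i) ∉ S := by
        by_contra h
        push_neg at h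
        exact hvS ((hmemX S v).mpr h)
      obtain ⟨i, hiS⟩ := this
      refine ⟨(v, i), Finset.mem_sdiff.mpr ⟨hvT i, hiS⟩, ?_⟩
      rw [htInd]
      exact h_subset _ _ hind (hinsert S (v, i))
    by_cases hcrit : ∃ e ∈ T \ S, ∃ j : Fin n, j ≠ e.2 ∧ (e.1, j) ∉ S
    · -- a non-critical element: inserting it doesn't change the intersection
      obtain ⟨e, he, j, hj, hjS⟩ := hcrit
      refine ⟨e, he, ?_⟩
      rw [htInd]
      have hXeq : X (insert e S) = X S := by
        apply Finset.Subset.antisymm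
        · intro w hw
          rw [hmemX] at hw ⊢
          intro i
          rcases Finset.mem_insert.mp (hw i) with h | h
          · -- then w = e.1, contradiction using j
            exfalso
            have hw1 : w = e.1 := congrArg Prod.fst h
            rcases Finset.mem_insert.mp (hw j) with h' | h'
            · have : j = e.2 := congrArg Prod.snd h'
              exact hj this
            · rw [hw1] at h'
              exact hjS h'
          · exact h
        · intro w hw
          rw [hmemX] at hw ⊢
          exact fun i => Finset.mem_insert_of_mem (hw i)
      rw [show (Finset.univ.filter fun v : V => ∀ i : Fin n, (v, i) ∈ insert e S)
          = X (insert e S) from rfl, hXeq]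
      exact hS'
    · -- every element of T \ S is critical; counting gives |X S| < |X T|
      push_neg at hcrit
      -- per-vertex inequality
      have hkey : ∀ v : V,
          cnt T v + (if v ∈ X S \ X T then 1 else 0)
            ≤ cnt S v + (if v ∈ X T \ X S then 1 else 0) := by
        intro v
        by_cases hex : ∃ i : Fin n, (v, i) ∈ T ∧ (v, i) ∉ S
        · obtain ⟨i, hiT, hiS⟩ := hex
          have hc := hcrit (v, i) (Finset.mem_sdiff.mpr ⟨hiT, hiS⟩)
          -- column of v in S is exactly univ.erase i
          have hcol : (Finset.univ.filter fun j : Fin n => (v, j) ∈ S)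
              = Finset.univ.erase i := by
            ext j
            simp only [Finset.mem_filter, Finset.mem_univ, true_and, Finset.mem_erase,
              and_true]
            constructor
            · intro h hne; rw [hne] at h; exact hiS h
            · intro h
              exact hc j h
          have haS : cnt S v = n - 1 := by
            rw [hcntdef]
            simp only
            rw [hcol, Finset.card_erase_of_mem (Finset.mem_univ i)]
            simp
          have hvS : v ∉ X S := by
            rw [hmemX]
            push_neg
            exact ⟨i, hiS⟩
          by_cases hvT : v ∈ X T
          · have h1 : cnt T v ≤ n := hcnt_le T v
            simp only [Finset.mem_sdiff, hvS, hvT, and_false, false_and, if_false,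
              not_false_iff, and_true, if_true]
            omega
          · have h2 : cnt T v ≠ n := fun h =>
              hvT ((hmemX T v).mpr ((hcnt_full T v).mp h))
            have h1 : cnt T v ≤ n := hcnt_le T v
            simp only [Finset.mem_sdiff, hvS, hvT, and_false, false_and, if_false]
            omega
        · push_neg at hex
          have hsub : (Finset.univ.filter fun j : Fin n => (v, j) ∈ T)
              ⊆ Finset.univ.filter fun j : Fin n => (v, j) ∈ S := by
            intro j hj
            simp only [Finset.mem_filter, Finset.mem_univ, true_and] at hj ⊢
            exact hex j hj
          have hba : cnt T v ≤ cnt S v := Finset.card_le_card hsub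
          have himp : v ∈ X T → v ∈ X S := by
            intro h
            rw [hmemX] at h ⊢
            exact fun i => hex i (h i)
          by_cases hvS : v ∈ X S
          · by_cases hvT : v ∈ X T
            · simp only [Finset.mem_sdiff, hvS, hvT, not_true, and_false, if_false]
              omega
            · have h2 : cnt T v ≠ n := fun h =>
                hvT ((hmemX T v).mpr ((hcnt_full T v).mp h))
              have h1 : cnt T v ≤ n := hcnt_le T v
              have h3 : cnt S v = n := (hcnt_full S v).mpr ((hmemX S v).mp hvS)
              simp only [Finset.mem_sdiff, hvS, hvT, not_false_iff, and_true, true_and,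
                if_true, false_and, if_false]
              omega
          · have hvT : v ∉ X T := fun h => hvS (himp h)
            simp only [Finset.mem_sdiff, hvS, hvT, false_and, if_false]
            omega
      -- sum the per-vertex inequalities
      have hsum : T.card + (X S \ X T).card ≤ S.card + (X T \ X S).card := by
        have hsum1 : ∀ (A : Finset V),
            (∑ v : V, (if v ∈ A then 1 else 0)) = A.card := by
          intro A
          rw [Finset.sum_ite_mem, Finset.univ_inter, Finset.card_eq_sum_ones]
        calc T.card + (X S \ X T).card
            = ∑ v : V, (cnt T v + (if v ∈ X S \ X T then 1 else 0)) := by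
              rw [Finset.sum_add_distrib, hsum1, hcard_sum]
          _ ≤ ∑ v : V, (cnt S v + (if v ∈ X T \ X S then 1 else 0)) :=
              Finset.sum_le_sum fun v _ => hkey v
          _ = S.card + (X T \ X S).card := by
              rw [Finset.sum_add_distrib, hsum1, hcard_sum]
      have hXlt : (X S).card < (X T).card := by
        have h1 := Finset.card_sdiff_add_card_inter (X S) (X T)
        have h2 := Finset.card_sdiff_add_card_inter (X T) (X S)
        rw [Finset.inter_comm] at h2
        omega
      exact hfinish hXlt
end

section
/- Let V be a finite set, let n ≥ 1, and let X_1,…,X_n, Y_1,…,Y_n be subsets of V with Σ_{i=1}^n |X_i| < Σ_{i=1}^n |Y_i|. For v ∈ V write X^{(v)} = {i ∈ {1,…,n} : v ∈ X_i} and Y^{(v)} = {i ∈ {1,…,n} : v ∈ Y_i}. Assume that for every v ∈ V, either X^{(v)} ⊇ Y^{(v)} or |X^{(v)}| ≥ n − 1. Then |(⋂_{i=1}^n Y_i) \ (⋂_{i=1}^n X_i)| > |(⋂_{i=1}^n X_i) \ (⋂_{i=1}^n Y_i)|. -/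
open Finset

private lemma aux_full {n : ℕ} (p : Fin n → Prop) [DecidablePred p] (h : ∀ i, p i) :
    (univ.filter p).card = n := by
  rw [filter_true_of_mem (fun i _ => h i), card_univ, Fintype.card_fin]

private lemma aux_notfull {n : ℕ} (p : Fin n → Prop) [DecidablePred p] (h : ¬ ∀ i, p i) :
    (univ.filter p).card ≤ n - 1 := by
  obtain ⟨i, hi⟩ := not_forall.mp h
  have hsub : univ.filter p ⊆ univ.erase i := by
    intro x hx
    simp only [mem_filter] at hx
    exact mem_erase.mpr ⟨fun he => hi (he ▸ hx.2), mem_univ x⟩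
  calc (univ.filter p).card ≤ (univ.erase i).card := card_le_card hsub
    _ = n - 1 := by rw [card_erase_of_mem (mem_univ i), card_univ, Fintype.card_fin]

/-- the key counting inequality from the proof of Lemma 4.2. -/
theorem stmt_1 {V : Type*} [Fintype V] [DecidableEq V] (n : ℕ) (hn : 1 ≤ n)
    (X Y : Fin n → Finset V)
    (hcard : ∑ i, (X i).card < ∑ i, (Y i).card)
    (hcond : ∀ v : V,
      (Finset.univ.filter fun i : Fin n => v ∈ Y i) ⊆
        (Finset.univ.filter fun i : Fin n => v ∈ X i) ∨
      n - 1 ≤ (Finset.univ.filter fun i : Fin n => v ∈ X i).card) :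
    ((Finset.univ.filter fun v : V => ∀ i, v ∈ X i) \
        (Finset.univ.filter fun v : V => ∀ i, v ∈ Y i)).card <
    ((Finset.univ.filter fun v : V => ∀ i, v ∈ Y i) \
        (Finset.univ.filter fun v : V => ∀ i, v ∈ X i)).card := by
  set A := ((Finset.univ.filter fun v : V => ∀ i, v ∈ X i) \
      (Finset.univ.filter fun v : V => ∀ i, v ∈ Y i)) with hA
  set B := ((Finset.univ.filter fun v : V => ∀ i, v ∈ Y i) \
      (Finset.univ.filter fun v : V => ∀ i, v ∈ X i)) with hB
  have hAmem : ∀ v : V, v ∈ A ↔ (∀ i, v ∈ X i) ∧ ¬ (∀ i, v ∈ Y i) := by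
    intro v; simp [hA]
  have hBmem : ∀ v : V, v ∈ B ↔ (∀ i, v ∈ Y i) ∧ ¬ (∀ i, v ∈ X i) := by
    intro v; simp [hB]
  -- pointwise inequality
  have key : ∀ v : V,
      (if v ∈ A then 1 else 0) + (univ.filter fun i : Fin n => v ∈ Y i).card ≤
      (if v ∈ B then 1 else 0) + (univ.filter fun i : Fin n => v ∈ X i).card := by
    intro v
    set fv := (univ.filter fun i : Fin n => v ∈ X i).card with hfv
    set gv := (univ.filter fun i : Fin n => v ∈ Y i).card with hgv
    by_cases hvA : v ∈ A
    · obtain ⟨hX, hnY⟩ := (hAmem v).mp hvA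
      have h1 : fv = n := aux_full _ hX
      have h2 : gv ≤ n - 1 := aux_notfull _ hnY
      simp only [hvA, if_pos]
      have : (if v ∈ B then 1 else 0) ≥ 0 := by positivity
      omega
    · simp only [hvA, if_neg, not_false_iff, zero_add]
      by_cases hvB : v ∈ B
      · obtain ⟨hY, hnX⟩ := (hBmem v).mp hvB
        have h1 : gv = n := aux_full _ hY
        have h2 : fv ≥ n - 1 := by
          rcases hcond v with hsub | hge
          · exfalso
            apply hnX
            intro i
            have : i ∈ univ.filter fun i : Fin n => v ∈ Y i := by
              simp [hY i]
            have := hsub this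
            simpa using this
          · exact hge
        simp only [hvB, if_pos]
        omega
      · simp only [hvB, if_neg, not_false_iff, zero_add]
        -- show gv ≤ fv
        rcases hcond v with hsub | hge
        · exact card_le_card hsub
        · by_cases hX : ∀ i, v ∈ X i
          · have : fv = n := aux_full _ hX
            have : gv ≤ n := le_trans (card_le_card (filter_subset _ _))
              (by rw [card_univ, Fintype.card_fin])
            omega
          · have hnY : ¬ ∀ i, v ∈ Y i := fun hY => hvB ((hBmem v).mpr ⟨hY, hX⟩)
            have h2 : gv ≤ n - 1 := aux_notfull _ hnY
            omega
  -- sum the pointwise inequality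
  have hsum : (∑ v : V, (if v ∈ A then 1 else 0)) +
      (∑ v : V, (univ.filter fun i : Fin n => v ∈ Y i).card) ≤
      (∑ v : V, (if v ∈ B then 1 else 0)) +
      (∑ v : V, (univ.filter fun i : Fin n => v ∈ X i).card) := by
    rw [← Finset.sum_add_distrib, ← Finset.sum_add_distrib]
    exact Finset.sum_le_sum fun v _ => key v
  have hcA : (∑ v : V, (if v ∈ A then 1 else 0)) = A.card := by
    rw [Finset.sum_ite_mem, Finset.univ_inter]
    exact (card_eq_sum_ones A).symm
  have hcB : (∑ v : V, (if v ∈ B then 1 else 0)) = B.card := by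
    rw [Finset.sum_ite_mem, Finset.univ_inter]
    exact (card_eq_sum_ones B).symm
  have hswapX : (∑ v : V, (univ.filter fun i : Fin n => v ∈ X i).card) = ∑ i, (X i).card := by
    simp only [card_filter]
    rw [Finset.sum_comm]
    refine Finset.sum_congr rfl fun i _ => ?_
    rw [Finset.sum_ite_mem, Finset.univ_inter]
    exact (card_eq_sum_ones (X i)).symm
  have hswapY : (∑ v : V, (univ.filter fun i : Fin n => v ∈ Y i).card) = ∑ i, (Y i).card := by
    simp only [card_filter]
    rw [Finset.sum_comm]
    refine Finset.sum_congr rfl fun i _ => ?_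
    rw [Finset.sum_ite_mem, Finset.univ_inter]
    exact (card_eq_sum_ones (Y i)).symm
  rw [hcA, hcB, hswapX, hswapY] at hsum
  omega
end

section
/- Let V be a finite set, let n ≥ 1, let w : V → ℝ be a nonnegative function, and let r be a nonnegative integer with r ≤ n·|V|. Define f : 2^{V × {1,…,n}} → ℝ ∪ {+∞} by f(S) = Σ_{v ∈ ⋂_{i=1}^n X_i(S)} w(v) if |S| = r and f(S) = +∞ otherwise, where X_i(S) = {v ∈ V : (v,i) ∈ S}. Then f is a valuated matroid: its effective domain (the r-element subsets of V × {1,…,n}) is nonempty, and for all S, T with |S| = |T| = r and every a ∈ S \ T there exists b ∈ T \ S such that f(S) + f(T) ≥ f((S \ {a}) ∪ {b}) + f((T \ {b}) ∪ {a}). -/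
lemma stmt2_mem_ins {V : Type*} [DecidableEq V] {n : ℕ} {U : Finset (V × Fin n)}
    {p b q : V × Fin n} : p ∈ insert b (U.erase q) ↔ p = b ∨ (p ≠ q ∧ p ∈ U) := by
  simp [Finset.mem_insert, Finset.mem_erase]

lemma stmt2_if_nonneg {P : Prop} [Decidable P] {c : ℝ} (hc : 0 ≤ c) :
    (0:ℝ) ≤ if P then c else 0 := by
  split_ifs
  · exact hc
  · exact le_rfl

-- key real-valued exchange lemma
lemma stmt2_key {V : Type*} [Fintype V] [DecidableEq V] {n : ℕ}
    (w : V → ℝ) (hw : ∀ v, 0 ≤ w v) (S T : Finset (V × Fin n)) (a : V × Fin n)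
    (haS : a ∈ S) (haT : a ∉ T) (hcard : S.card = T.card) :
    ∃ b ∈ T \ S,
      (∑ v, if ∀ k, (v, k) ∈ insert b (S.erase a) then w v else 0) +
      (∑ v, if ∀ k, (v, k) ∈ insert a (T.erase b) then w v else 0) ≤
      (∑ v, if ∀ k, (v, k) ∈ S then w v else 0) +
      (∑ v, if ∀ k, (v, k) ∈ T then w v else 0) := by
  obtain ⟨x, i⟩ := a
  have hTS : (T \ S).Nonempty := by
    rw [← Finset.card_pos, Finset.card_sdiff_comm hcard.symm, Finset.card_pos]
    exact ⟨(x, i), Finset.mem_sdiff.2 ⟨haS, haT⟩⟩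
  by_cases hx : ∃ j, (x, j) ∈ T \ S
  · -- take b = (x, j)
    obtain ⟨j, hj⟩ := hx
    refine ⟨(x, j), hj, ?_⟩
    rw [Finset.mem_sdiff] at hj
    have hij : i ≠ j := fun h => hj.2 (h ▸ haS)
    rw [← Finset.sum_add_distrib, ← Finset.sum_add_distrib]
    apply Finset.sum_le_sum
    intro v _
    by_cases hv : v = x
    · subst hv
      have h1 : ¬ ∀ k, (v, k) ∈ insert (v, j) (S.erase (v, i)) := by
        intro h
        rcases stmt2_mem_ins.1 (h i) with h' | h'
        · exact hij (congrArg Prod.snd h')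
        · exact h'.1 rfl
      have h2 : ¬ ∀ k, (v, k) ∈ insert (v, i) (T.erase (v, j)) := by
        intro h
        rcases stmt2_mem_ins.1 (h j) with h' | h'
        · exact hij (congrArg Prod.snd h').symm
        · exact h'.1 rfl
      rw [if_neg h1, if_neg h2]
      split_ifs <;> linarith [hw v]
    · have h1 : (∀ k, (v, k) ∈ insert (x, j) (S.erase (x, i))) ↔ ∀ k, (v, k) ∈ S := by
        constructor
        · intro h k
          rcases stmt2_mem_ins.1 (h k) with h' | h'
          · exact absurd (congrArg Prod.fst h') hv
          · exact h'.2
        · intro h k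
          exact stmt2_mem_ins.2 (Or.inr ⟨fun he => hv (congrArg Prod.fst he), h k⟩)
      have h2 : (∀ k, (v, k) ∈ insert (x, i) (T.erase (x, j))) ↔ ∀ k, (v, k) ∈ T := by
        constructor
        · intro h k
          rcases stmt2_mem_ins.1 (h k) with h' | h'
          · exact absurd (congrArg Prod.fst h') hv
          · exact h'.2
        · intro h k
          exact stmt2_mem_ins.2 (Or.inr ⟨fun he => hv (congrArg Prod.fst he), h k⟩)
      simp only [h1, h2]
      exact le_rfl
  · -- no copy of x in T \ S
    push_neg at hx
    have hxS : ∀ j, (x, j) ∈ T → (x, j) ∈ S := by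
      intro j hjT
      by_contra h
      exact hx j (Finset.mem_sdiff.2 ⟨hjT, h⟩)
    set Bad : Finset (V × Fin n) :=
      (T \ S).filter (fun b => (∀ k, k ≠ b.2 → (b.1, k) ∈ S) ∧ ¬ ∀ k, (b.1, k) ∈ T) with hBad
    have hBadsub : Bad ⊆ T \ S := Finset.filter_subset _ _
    have hinj : Bad.card ≤ ((S \ T).erase (x, i)).card := by
      classical
      apply Finset.card_le_card_of_injOn
        (fun b => if h : ∃ k, (b.1, k) ∉ T then (b.1, h.choose) else b)
      · intro b hb
        simp only [Finset.mem_coe, hBad, Finset.mem_filter, Finset.mem_sdiff] at hb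
        obtain ⟨⟨hbT, hbS⟩, halmost, hnotfull⟩ := hb
        have hex : ∃ k, (b.1, k) ∉ T := by push_neg at hnotfull; exact hnotfull
        simp only [Finset.mem_coe, dif_pos hex]
        have hk := hex.choose_spec
        have hbT' : (b.1, b.2) ∈ T := hbT
        have hkne : hex.choose ≠ b.2 := fun h => hk (h ▸ hbT')
        have hkS : (b.1, hex.choose) ∈ S := halmost _ hkne
        have hbx : b.1 ≠ x := by
          intro h
          have : (b.1, b.2) ∈ S := by rw [h]; exact hxS b.2 (by rwa [h] at hbT')
          exact hbS this
        refine Finset.mem_erase.2 ⟨?_, Finset.mem_sdiff.2 ⟨hkS, hk⟩⟩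
        intro he
        exact hbx (congrArg Prod.fst he)
      · intro b hb c hc heq
        rw [Finset.mem_coe, hBad, Finset.mem_filter, Finset.mem_sdiff] at hb hc
        obtain ⟨⟨hbT, hbS⟩, halmostb, hnotfullb⟩ := hb
        obtain ⟨⟨hcT, hcS⟩, halmostc, hnotfullc⟩ := hc
        have hexb : ∃ k, (b.1, k) ∉ T := by push_neg at hnotfullb; exact hnotfullb
        have hexc : ∃ k, (c.1, k) ∉ T := by push_neg at hnotfullc; exact hnotfullc
        simp only [dif_pos hexb, dif_pos hexc, Prod.mk.injEq] at heq
        have h1 : b.1 = c.1 := heq.1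
        by_cases h2 : b.2 = c.2
        · exact Prod.ext h1 h2
        · exfalso
          have hcb : (c.1, b.2) ∈ S := halmostc b.2 h2
          rw [← h1] at hcb
          have : (b.1, b.2) ∈ S := hcb
          exact hbS this
    have hlt : Bad.card < (T \ S).card := by
      have h1 : ((S \ T).erase (x, i)).card = (S \ T).card - 1 :=
        Finset.card_erase_of_mem (Finset.mem_sdiff.2 ⟨haS, haT⟩)
      have h2 : (S \ T).card = (T \ S).card := Finset.card_sdiff_comm hcard
      have h3 : 0 < (S \ T).card :=
        Finset.card_pos.2 ⟨(x, i), Finset.mem_sdiff.2 ⟨haS, haT⟩⟩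
      omega
    obtain ⟨b, hbTS, hbBad⟩ : ∃ b ∈ T \ S, b ∉ Bad := by
      by_contra h
      push_neg at h
      exact absurd (Finset.card_le_card (fun b hb => h b hb)) (by omega)
    refine ⟨b, hbTS, ?_⟩
    obtain ⟨y, j⟩ := b
    rw [Finset.mem_sdiff] at hbTS
    obtain ⟨hbT, hbS⟩ := hbTS
    have hyx : y ≠ x := by
      intro h
      subst h
      exact hbS (hxS j hbT)
    have hgood : (∀ k, k ≠ j → (y, k) ∈ S) → ∀ k, (y, k) ∈ T := by
      intro halmost
      by_contra hnf
      exact hbBad (Finset.mem_filter.2 ⟨Finset.mem_sdiff.2 ⟨hbT, hbS⟩, halmost, hnf⟩)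
    rw [← Finset.sum_add_distrib, ← Finset.sum_add_distrib]
    apply Finset.sum_le_sum
    intro v _
    by_cases hvx : v = x
    · subst hvx
      have h1 : ¬ ∀ k, (v, k) ∈ insert (y, j) (S.erase (v, i)) := by
        intro h
        rcases stmt2_mem_ins.1 (h i) with h' | h'
        · exact hyx (congrArg Prod.fst h').symm
        · exact h'.1 rfl
      have hST : (∀ k, (v, k) ∈ insert (v, i) (T.erase (y, j))) → ∀ k, (v, k) ∈ S := by
        intro h k
        rcases stmt2_mem_ins.1 (h k) with h' | h'
        · rw [h']; exact haS
        · have hne : (v, k) ≠ (y, j) := fun he => hyx (congrArg Prod.fst he).symm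
          exact hxS k h'.2
      rw [if_neg h1, zero_add]
      by_cases h2 : ∀ k, (v, k) ∈ insert (v, i) (T.erase (y, j))
      · rw [if_pos h2, if_pos (hST h2)]
        have := stmt2_if_nonneg (P := ∀ k, (v, k) ∈ T) (hw v)
        linarith
      · rw [if_neg h2]
        split_ifs <;> linarith [hw v]
    · by_cases hvy : v = y
      · subst hvy
        have h2 : ¬ ∀ k, (v, k) ∈ insert (x, i) (T.erase (v, j)) := by
          intro h
          rcases stmt2_mem_ins.1 (h j) with h' | h'
          · exact hvx (congrArg Prod.fst h')
          · exact h'.1 rfl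
        have hS'T : (∀ k, (v, k) ∈ insert (v, j) (S.erase (x, i))) → ∀ k, (v, k) ∈ T := by
          intro h
          apply hgood
          intro k hk
          rcases stmt2_mem_ins.1 (h k) with h' | h'
          · exact absurd (congrArg Prod.snd h') hk
          · exact h'.2
        rw [if_neg h2, add_zero]
        by_cases h1 : ∀ k, (v, k) ∈ insert (v, j) (S.erase (x, i))
        · rw [if_pos h1, if_pos (hS'T h1)]
          have := stmt2_if_nonneg (P := ∀ k, (v, k) ∈ S) (hw v)
          linarith
        · rw [if_neg h1]
          split_ifs <;> linarith [hw v]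
      · have h1 : (∀ k, (v, k) ∈ insert (y, j) (S.erase (x, i))) ↔ ∀ k, (v, k) ∈ S := by
          constructor
          · intro h k
            rcases stmt2_mem_ins.1 (h k) with h' | h'
            · exact absurd (congrArg Prod.fst h') hvy
            · exact h'.2
          · intro h k
            exact stmt2_mem_ins.2 (Or.inr ⟨fun he => hvx (congrArg Prod.fst he), h k⟩)
        have h2 : (∀ k, (v, k) ∈ insert (x, i) (T.erase (y, j))) ↔ ∀ k, (v, k) ∈ T := by
          constructor
          · intro h k
            rcases stmt2_mem_ins.1 (h k) with h' | h'
            · exact absurd (congrArg Prod.fst h') hvx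
            · exact h'.2
          · intro h k
            exact stmt2_mem_ins.2 (Or.inr ⟨fun he => hvy (congrArg Prod.fst he), h k⟩)
        simp only [h1, h2]
        exact le_rfl

/-- the function `S ↦ w(⋂ᵢ Xᵢ(S))` restricted to `r`-element subsets of the
disjoint union of `n` copies of `V` is a valuated matroid when `w ≥ 0`. -/
theorem stmt_2 {V : Type*} [Fintype V] [DecidableEq V] (n : ℕ) (hn : 1 ≤ n)
    (w : V → ℝ) (hw : ∀ v, 0 ≤ w v) (r : ℕ) (hr : r ≤ n * Fintype.card V)
    (f : Finset (V × Fin n) → WithTop ℝ)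
    (hf : ∀ S : Finset (V × Fin n), f S =
      if S.card = r then
        ((∑ v ∈ Finset.univ.filter (fun v : V => ∀ i : Fin n, (v, i) ∈ S), w v : ℝ) : WithTop ℝ)
      else ⊤) :
    (∃ S : Finset (V × Fin n), f S ≠ ⊤) ∧
    (∀ S T : Finset (V × Fin n), S.card = r → T.card = r → ∀ a ∈ S \ T, ∃ b ∈ T \ S,
      f (insert b (S.erase a)) + f (insert a (T.erase b)) ≤ f S + f T) := by
  constructor
  · have hcard : r ≤ (Finset.univ : Finset (V × Fin n)).card := by
      rw [Finset.card_univ, Fintype.card_prod, Fintype.card_fin, mul_comm]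
      exact hr
    obtain ⟨S, -, hS⟩ := Finset.exists_subset_card_eq hcard
    refine ⟨S, ?_⟩
    rw [hf, if_pos hS]
    exact WithTop.coe_ne_top
  · intro S T hS hT a ha
    rw [Finset.mem_sdiff] at ha
    obtain ⟨b, hbTS, hkey⟩ := stmt2_key w hw S T a ha.1 ha.2 (hS.trans hT.symm)
    refine ⟨b, hbTS, ?_⟩
    rw [Finset.mem_sdiff] at hbTS
    have hbea : b ∉ S.erase a := fun h => hbTS.2 (Finset.mem_of_mem_erase h)
    have haeb : a ∉ T.erase b := fun h => ha.2 (Finset.mem_of_mem_erase h)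
    have hrpos : 1 ≤ r := by rw [← hS]; exact Finset.card_pos.2 ⟨a, ha.1⟩
    have hc1 : (insert b (S.erase a)).card = r := by
      rw [Finset.card_insert_of_notMem hbea, Finset.card_erase_of_mem ha.1, hS]; omega
    have hc2 : (insert a (T.erase b)).card = r := by
      rw [Finset.card_insert_of_notMem haeb, Finset.card_erase_of_mem hbTS.1, hT]; omega
    rw [hf, hf, hf, hf, if_pos hS, if_pos hT, if_pos hc1, if_pos hc2,
      ← WithTop.coe_add, ← WithTop.coe_add, WithTop.coe_le_coe]
    simpa only [Finset.sum_filter] using hkey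
end

section
/- Let V be a finite set, let n ≥ 1, and let w : V → ℝ be a nonnegative function. Define w̃ : 2^{V × {1,…,n}} → ℝ by w̃(S) = Σ_{v ∈ ⋂_{i=1}^n X_i(S)} w(v), where X_i(S) = {v ∈ V : (v,i) ∈ S}. Then w̃ is laminar convex: there exist a laminar family ℒ of subsets of V × {1,…,n} and, for each L ∈ ℒ, a discrete convex function g_L : ℤ → ℝ ∪ {+∞}, such that w̃(S) = Σ_{L ∈ ℒ} g_L(|S ∩ L|) for every S ⊆ V × {1,…,n}. -/
/-- Lemma 4.4: the function `S ↦ w(⋂ᵢ Xᵢ(S))` on subsets of the disjoint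
union of `n` copies of `V` is laminar convex when `w ≥ 0`. -/
theorem stmt_3 {V : Type*} [Fintype V] [DecidableEq V] (n : ℕ) (hn : 1 ≤ n)
    (w : V → ℝ) (hw : ∀ v, 0 ≤ w v) :
    ∃ (L : Finset (Finset (V × Fin n))) (g : Finset (V × Fin n) → ℤ → WithTop ℝ),
      (∀ A ∈ L, ∀ B ∈ L, A ⊆ B ∨ B ⊆ A ∨ A ∩ B = ∅) ∧
      (∀ A ∈ L, ∀ k : ℤ, 2 * g A k ≤ g A (k + 1) + g A (k - 1)) ∧
      (∀ S : Finset (V × Fin n),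
        ((∑ v ∈ Finset.univ.filter (fun v : V => ∀ i : Fin n, (v, i) ∈ S), w v : ℝ) : WithTop ℝ)
          = ∑ A ∈ L, g A ((S ∩ A).card : ℤ)) := by
  classical
  set blk : V → Finset (V × Fin n) := fun v => ({v} : Finset V) ×ˢ Finset.univ with hblk
  have hmem : ∀ (a v : V) (i : Fin n), (v, i) ∈ blk a ↔ v = a := by
    intro a v i; simp [hblk, eq_comm]
  have hinj : Function.Injective blk := by
    intro a b hab
    have h1 : (a, (⟨0, hn⟩ : Fin n)) ∈ blk b := by
      rw [← hab, hmem]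
    exact (hmem b a _).mp h1
  have hbcard : ∀ v : V, (blk v).card = n := by intro v; simp [hblk]
  set f : Finset (V × Fin n) → ℤ → ℝ :=
    fun A k => (∑ v ∈ Finset.univ.filter (fun v => blk v = A), w v)
      * ((max (k - (n - 1)) 0 : ℤ) : ℝ) with hf
  refine ⟨Finset.univ.image blk, fun A k => ((f A k : ℝ) : WithTop ℝ), ?_, ?_, ?_⟩
  · intro A hA B hB
    simp only [Finset.mem_image] at hA hB
    obtain ⟨a, -, rfl⟩ := hA
    obtain ⟨b, -, rfl⟩ := hB
    rcases eq_or_ne a b with rfl | hab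
    · exact Or.inl subset_rfl
    · refine Or.inr (Or.inr ?_)
      ext ⟨v, i⟩
      simp only [Finset.mem_inter, hmem, Finset.notMem_empty, iff_false, not_and]
      rintro rfl h; exact hab h
  · intro A hA k
    have h2 : ((2 : WithTop ℝ)) = ((2 : ℝ) : WithTop ℝ) := by norm_cast
    rw [h2, ← WithTop.coe_mul, ← WithTop.coe_add, WithTop.coe_le_coe]
    have hc : 0 ≤ ∑ v ∈ Finset.univ.filter (fun v => blk v = A), w v :=
      Finset.sum_nonneg fun v _ => hw v
    have hZ : 2 * max (k - (n - 1)) 0 ≤ max (k + 1 - (n - 1)) 0 + max (k - 1 - (n - 1)) 0 := by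
      omega
    have hmax : 2 * ((max (k - (n - 1)) 0 : ℤ) : ℝ) ≤
        ((max (k + 1 - (n - 1)) 0 : ℤ) : ℝ) + ((max (k - 1 - (n - 1)) 0 : ℤ) : ℝ) := by
      exact_mod_cast hZ
    simp only [hf]
    calc 2 * ((∑ v ∈ Finset.univ.filter (fun v => blk v = A), w v) * ((max (k - (n - 1)) 0 : ℤ) : ℝ))
        = (∑ v ∈ Finset.univ.filter (fun v => blk v = A), w v)
          * (2 * ((max (k - (n - 1)) 0 : ℤ) : ℝ)) := by ring
      _ ≤ (∑ v ∈ Finset.univ.filter (fun v => blk v = A), w v) *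
          (((max (k + 1 - (n - 1)) 0 : ℤ) : ℝ) + ((max (k - 1 - (n - 1)) 0 : ℤ) : ℝ)) :=
            mul_le_mul_of_nonneg_left hmax hc
      _ = _ := by ring
  · intro S
    rw [Finset.sum_image (by intro a _ b _ h; exact hinj h)]
    have key : ∀ x ∈ (Finset.univ : Finset V),
        ((f (blk x) ((S ∩ blk x).card : ℤ) : ℝ) : WithTop ℝ)
          = (((if (∀ i : Fin n, (x, i) ∈ S) then w x else 0 : ℝ)) : WithTop ℝ) := by
      intro x _
      congr 1
      have hfil : Finset.univ.filter (fun v => blk v = blk x) = {x} := by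
        ext v; simp [hinj.eq_iff]
      have hcard : (S ∩ blk x).card ≤ n := by
        calc (S ∩ blk x).card ≤ (blk x).card := Finset.card_le_card Finset.inter_subset_right
          _ = n := hbcard x
      by_cases hx : ∀ i : Fin n, (x, i) ∈ S
      · have hS : S ∩ blk x = blk x := by
          apply Finset.inter_eq_right.mpr
          intro ⟨v, i⟩ hv
          rw [hmem] at hv
          rw [hv]; exact hx i
        rw [hS]
        simp only [hf]
        rw [hfil, Finset.sum_singleton, if_pos hx]
        rw [show ((blk x).card : ℤ) = (n : ℤ) from by exact_mod_cast hbcard x]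
        rw [show max ((n : ℤ) - (n - 1)) 0 = 1 from by omega]
        simp
      · have hlt : (S ∩ blk x).card < n := by
          rcases lt_or_eq_of_le hcard with h | h
          · exact h
          · exfalso
            have heq : S ∩ blk x = blk x :=
              Finset.eq_of_subset_of_card_le Finset.inter_subset_right
                (by rw [hbcard x, h])
            apply hx
            intro i
            have : (x, i) ∈ S ∩ blk x := by rw [heq, hmem]
            exact (Finset.mem_inter.mp this).1
        simp only [hf]
        rw [show max (((S ∩ blk x).card : ℤ) - (n - 1)) 0 = 0 from by omega]
        simp [if_neg hx]
    rw [Finset.sum_congr rfl key, ← WithTop.coe_sum]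
    congr 1
    rw [Finset.sum_filter]
end

section
/- Let V be a finite set, let ω_1, ω_2 : 2^V → ℝ ∪ {+∞} be valuated matroids, and let k be a nonnegative integer. Suppose X_1 ∈ dom ω_1 and X_2 ∈ dom ω_2 satisfy |X_1 ∩ X_2| ≤ k and minimize ω_1(Y_1) + ω_2(Y_2) over all pairs (Y_1, Y_2) with |Y_1 ∩ Y_2| ≤ k. If moreover |X_1 ∩ X_2| < k, then X_1 is a global minimizer of ω_1 (ω_1(X_1) ≤ ω_1(Y) for all Y ⊆ V) and X_2 is a global minimizer of ω_2. -/
/-- A valuated matroid on `2^V` with values in `ℝ ∪ {+∞}`. -/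
def IsValuatedMatroid {V : Type*} [DecidableEq V] (ω : Finset V → WithTop ℝ) : Prop :=
  (∃ X, ω X ≠ ⊤) ∧
  ∀ X Y : Finset V, ω X ≠ ⊤ → ω Y ≠ ⊤ → ∀ v ∈ X \ Y, ∃ u ∈ Y \ X,
    ω (insert u (X.erase v)) + ω (insert v (Y.erase u)) ≤ ω X + ω Y

/-- Local optimality implies global optimality for a valuated matroid. -/
lemma local_to_global {V : Type*} [DecidableEq V] (ω : Finset V → WithTop ℝ)
    (hω : IsValuatedMatroid ω) (X : Finset V) (hX : ω X ≠ ⊤)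
    (hloc : ∀ v u : V, ω X ≤ ω (insert u (X.erase v))) :
    ∀ Y : Finset V, ω X ≤ ω Y := by
  suffices h : ∀ n (Y : Finset V), (X \ Y).card ≤ n → ω X ≤ ω Y by
    intro Y; exact h (X \ Y).card Y le_rfl
  intro n
  induction n with
  | zero =>
    intro Y hY
    by_cases hYt : ω Y = ⊤
    · simp [hYt]
    have hXY : X \ Y = ∅ := Finset.card_eq_zero.mp (Nat.le_zero.mp hY)
    have hsub : X ⊆ Y := by
      intro x hx
      by_contra hxy
      have : x ∈ X \ Y := Finset.mem_sdiff.mpr ⟨hx, hxy⟩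
      simp [hXY] at this
    rcases eq_or_ne X Y with rfl | hne
    · exact le_rfl
    · -- Y \ X nonempty, exchange gives element of X \ Y = ∅
      have hYX : (Y \ X).Nonempty := by
        rw [Finset.sdiff_nonempty]
        intro hsub'
        exact hne (le_antisymm hsub hsub')
      obtain ⟨v, hv⟩ := hYX
      obtain ⟨u, hu, -⟩ := hω.2 Y X hYt hX v hv
      simp [hXY] at hu
  | succ n ih =>
    intro Y hY
    by_cases hYt : ω Y = ⊤
    · simp [hYt]
    by_cases hXY : X \ Y = ∅
    · exact ih Y (by simp [hXY])
    obtain ⟨v, hv⟩ := Finset.nonempty_iff_ne_empty.mpr hXY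
    obtain ⟨u, hu, hex⟩ := hω.2 X Y hX hYt v hv
    set Y' := insert v (Y.erase u) with hY'def
    have huY : u ∈ Y := (Finset.mem_sdiff.mp hu).1
    have huX : u ∉ X := (Finset.mem_sdiff.mp hu).2
    have hvX : v ∈ X := (Finset.mem_sdiff.mp hv).1
    have hvY : v ∉ Y := (Finset.mem_sdiff.mp hv).2
    -- chain
    have h1 : ω X + ω Y' ≤ ω (insert u (X.erase v)) + ω Y' :=
      add_le_add_left (hloc v u) _
    have h2 : ω X + ω Y' ≤ ω X + ω Y := h1.trans hex
    have hY'le : ω Y' ≤ ω Y := (WithTop.add_le_add_iff_left hX).mp h2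
    -- X \ Y' = (X \ Y).erase v
    have hsd : X \ Y' = (X \ Y).erase v := by
      ext x
      simp only [hY'def, Finset.mem_sdiff, Finset.mem_insert, Finset.mem_erase]
      constructor
      · rintro ⟨hx, h⟩
        push_neg at h
        exact ⟨h.1, hx, fun hxY => h.2 (fun hxu => huX (hxu ▸ hx)) hxY⟩
      · rintro ⟨hxv, hx, hxY⟩
        refine ⟨hx, ?_⟩
        push_neg
        exact ⟨hxv, fun _ => hxY⟩
    have hcard : (X \ Y').card ≤ n := by
      rw [hsd]
      have := Finset.card_erase_of_mem hv
      omega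
    exact (ih Y' hcard).trans hY'le

/-- if `(X₁, X₂)` is optimal for (V_{≤k}) and `|X₁ ∩ X₂| < k`, then `X₁`
and `X₂` are global minimizers of `ω₁` and `ω₂`, respectively. -/
theorem stmt_13 {V : Type*} [Fintype V] [DecidableEq V]
    (ω₁ ω₂ : Finset V → WithTop ℝ)
    (hω₁ : IsValuatedMatroid ω₁) (hω₂ : IsValuatedMatroid ω₂)
    (k : ℕ) (X₁ X₂ : Finset V) (hX₁ : ω₁ X₁ ≠ ⊤) (hX₂ : ω₂ X₂ ≠ ⊤)
    (hle : (X₁ ∩ X₂).card ≤ k)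
    (hopt : ∀ Y₁ Y₂ : Finset V, (Y₁ ∩ Y₂).card ≤ k → ω₁ X₁ + ω₂ X₂ ≤ ω₁ Y₁ + ω₂ Y₂)
    (hlt : (X₁ ∩ X₂).card < k) :
    (∀ Y : Finset V, ω₁ X₁ ≤ ω₁ Y) ∧ (∀ Y : Finset V, ω₂ X₂ ≤ ω₂ Y) := by
  constructor
  · apply local_to_global ω₁ hω₁ X₁ hX₁
    intro v u
    have hk : ((insert u (X₁.erase v)) ∩ X₂).card ≤ k := by
      have hsub : (insert u (X₁.erase v)) ∩ X₂ ⊆ insert u (X₁ ∩ X₂) := by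
        intro x hx
        simp only [Finset.mem_inter, Finset.mem_insert, Finset.mem_erase] at hx ⊢
        rcases hx with ⟨hx1 | hx1, hx2⟩
        · exact Or.inl hx1
        · exact Or.inr ⟨hx1.2, hx2⟩
      calc ((insert u (X₁.erase v)) ∩ X₂).card ≤ (insert u (X₁ ∩ X₂)).card :=
            Finset.card_le_card hsub
        _ ≤ (X₁ ∩ X₂).card + 1 := Finset.card_insert_le _ _
        _ ≤ k := hlt
    exact (WithTop.add_le_add_iff_right hX₂).mp (hopt (insert u (X₁.erase v)) X₂ hk)
  · apply local_to_global ω₂ hω₂ X₂ hX₂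
    intro v u
    have hk : (X₁ ∩ (insert u (X₂.erase v))).card ≤ k := by
      have hsub : X₁ ∩ (insert u (X₂.erase v)) ⊆ insert u (X₁ ∩ X₂) := by
        intro x hx
        simp only [Finset.mem_inter, Finset.mem_insert, Finset.mem_erase] at hx ⊢
        rcases hx with ⟨hx1, hx2 | hx2⟩
        · exact Or.inl hx2
        · exact Or.inr ⟨hx1, hx2.2⟩
      calc (X₁ ∩ (insert u (X₂.erase v))).card ≤ (insert u (X₁ ∩ X₂)).card :=
            Finset.card_le_card hsub
        _ ≤ (X₁ ∩ X₂).card + 1 := Finset.card_insert_le _ _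
        _ ≤ k := hlt
    exact (WithTop.add_le_add_iff_left hX₁).mp (hopt X₁ (insert u (X₂.erase v)) hk)
end

section
/- Let V be a finite set, let M_1 and M_2 be matroids on V with base families ℬ_1 and ℬ_2, let w_1, w_2 : V → ℝ, and let k be a nonnegative integer. Let X_1 ∈ ℬ_1 and X_2 ∈ ℬ_2 with |X_1 ∩ X_2| = k. Suppose there exist functions q_1 : V → ℝ with q_1 ≥ 0, q_2 : V → ℝ with q_2 ≤ 0, and a real λ ≥ 0 such that: (i) q_1(v) = q_2(v) + λ for every v ∈ V; (ii) X_1 minimizes Y ↦ Σ_{v∈Y}(w_1(v) − q_1(v)) over ℬ_1, and X_2 minimizes Y ↦ Σ_{v∈Y}(w_2(v) + q_2(v)) over ℬ_2; (iii) q_1(v) = 0 for every v ∈ X_1 \ X_2 and q_2(v) = 0 for every v ∈ X_2 \ X_1. Then (X_1, X_2) is optimal for problem (W_{=k}): for all Y_1 ∈ ℬ_1 and Y_2 ∈ ℬ_2 with |Y_1 ∩ Y_2| = k, Σ_{v∈X_1} w_1(v) + Σ_{v∈X_2} w_2(v) ≤ Σ_{v∈Y_1} w_1(v) + Σ_{v∈Y_2}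 w_2(v). -/
/-- sufficiency of an LPT optimality witness `(q₁, q₂, λ)` for optimality
of `(X₁, X₂)` in problem (W_{=k}). Matroids are given by their base families, which are
nonempty and satisfy the basis-exchange axiom. -/
theorem stmt_15 {V : Type*} [Fintype V] [DecidableEq V]
    (B₁ B₂ : Finset V → Prop)
    (hne₁ : ∃ X, B₁ X) (hne₂ : ∃ X, B₂ X)
    (hex₁ : ∀ X Y : Finset V, B₁ X → B₁ Y → ∀ v ∈ X \ Y, ∃ u ∈ Y \ X,
      B₁ (insert u (X.erase v)))
    (hex₂ : ∀ X Y : Finset V, B₂ X → B₂ Y → ∀ v ∈ X \ Y, ∃ u ∈ Y \ X,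
      B₂ (insert u (X.erase v)))
    (w₁ w₂ : V → ℝ) (k : ℕ)
    (X₁ X₂ : Finset V) (hX₁ : B₁ X₁) (hX₂ : B₂ X₂) (hcard : (X₁ ∩ X₂).card = k)
    (q₁ q₂ : V → ℝ) (lam : ℝ)
    (hq₁ : ∀ v, 0 ≤ q₁ v) (hq₂ : ∀ v, q₂ v ≤ 0) (hlam : 0 ≤ lam)
    (hshift : ∀ v, q₁ v = q₂ v + lam)
    (hmin₁ : ∀ Y : Finset V, B₁ Y →
      ∑ v ∈ X₁, (w₁ v - q₁ v) ≤ ∑ v ∈ Y, (w₁ v - q₁ v))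
    (hmin₂ : ∀ Y : Finset V, B₂ Y →
      ∑ v ∈ X₂, (w₂ v + q₂ v) ≤ ∑ v ∈ Y, (w₂ v + q₂ v))
    (hzero₁ : ∀ v ∈ X₁ \ X₂, q₁ v = 0)
    (hzero₂ : ∀ v ∈ X₂ \ X₁, q₂ v = 0) :
    ∀ Y₁ Y₂ : Finset V, B₁ Y₁ → B₂ Y₂ → (Y₁ ∩ Y₂).card = k →
      ∑ v ∈ X₁, w₁ v + ∑ v ∈ X₂, w₂ v ≤ ∑ v ∈ Y₁, w₁ v + ∑ v ∈ Y₂, w₂ v := by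
  intro Y₁ Y₂ hY₁ hY₂ hYcard
  -- Key identity for X: q₁(X₁) - q₂(X₂) = λ k
  have hXq : ∑ v ∈ X₁, q₁ v - ∑ v ∈ X₂, q₂ v = lam * k := by
    have h1 : ∑ v ∈ X₁, q₁ v = ∑ v ∈ X₁ ∩ X₂, q₁ v := by
      rw [← Finset.sum_inter_add_sum_sdiff X₁ X₂ q₁,
        Finset.sum_eq_zero hzero₁, add_zero]
    have h2 : ∑ v ∈ X₂, q₂ v = ∑ v ∈ X₁ ∩ X₂, q₂ v := by
      rw [Finset.inter_comm, ← Finset.sum_inter_add_sum_sdiff X₂ X₁ q₂,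
        Finset.sum_eq_zero hzero₂, add_zero]
    rw [h1, h2, ← Finset.sum_sub_distrib]
    have : ∀ v ∈ X₁ ∩ X₂, q₁ v - q₂ v = lam := by
      intro v _; rw [hshift v]; ring
    rw [Finset.sum_congr rfl this, Finset.sum_const, hcard, nsmul_eq_mul, mul_comm]
  -- Key inequality for Y: λ k ≤ q₁(Y₁) - q₂(Y₂)
  have hYq : lam * k ≤ ∑ v ∈ Y₁, q₁ v - ∑ v ∈ Y₂, q₂ v := by
    have h1 : ∑ v ∈ Y₁ ∩ Y₂, q₁ v ≤ ∑ v ∈ Y₁, q₁ v :=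
      Finset.sum_le_sum_of_subset_of_nonneg Finset.inter_subset_left
        (fun v _ _ => hq₁ v)
    have h2 : ∑ v ∈ Y₂, q₂ v ≤ ∑ v ∈ Y₁ ∩ Y₂, q₂ v := by
      rw [Finset.inter_comm]
      have := Finset.sum_le_sum_of_subset_of_nonneg
        (Finset.inter_subset_left (s₁ := Y₂) (s₂ := Y₁))
        (fun v _ _ => neg_nonneg.mpr (hq₂ v)) (f := fun v => -q₂ v)
      simp only [Finset.sum_neg_distrib] at this
      linarith
    have hlk : lam * k = ∑ v ∈ Y₁ ∩ Y₂, (q₁ v - q₂ v) := by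
      have : ∀ v ∈ Y₁ ∩ Y₂, q₁ v - q₂ v = lam := by
        intro v _; rw [hshift v]; ring
      rw [Finset.sum_congr rfl this, Finset.sum_const, hYcard, nsmul_eq_mul, mul_comm]
    rw [hlk, Finset.sum_sub_distrib]
    linarith
  have m1 := hmin₁ Y₁ hY₁
  have m2 := hmin₂ Y₂ hY₂
  simp only [Finset.sum_sub_distrib, Finset.sum_add_distrib] at m1 m2
  linarith
end
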